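/- Let f : ℝ → ℝ be defined by f(x) = x²/2, and define sequences x⁽⁰⁾ = 2, ỹ⁽ᵏ⁾ = x⁽ᵏ⁾ − (1/2)^(k+1), x⁽ᵏ⁺¹⁾ = ỹ⁽ᵏ⁾. Then x⁽ᵏ⁾ = 1 + (1/2)^k for all k, so the sequence converges to 1, which is not a stationary point of f (the only stationary point being 0). -/

import Mathlib

open Filter Topology

theorem stmt_9 (x : ℕ → ℝ) (h0 : x 0 = 2)
    (hrec : ∀ k : ℕ, x (k + 1) = x k - (1 / 2 : ℝ) ^ (k + 1)) :
    (∀ k : ℕ, x k = 1 + (1 / 2 : ℝ) ^ k) ∧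
    Tendsto x atTop (𝓝 1) ∧
    deriv (fun t : ℝ => t ^ 2 / 2) 1 ≠ 0 ∧
    (∀ t : ℝ, deriv (fun s : ℝ => s ^ 2 / 2) t = 0 ↔ t = 0) := by
  have hform : ∀ k : ℕ, x k = 1 + (1 / 2 : ℝ) ^ k := by
    intro k
    induction k with
    | zero => simp [h0]; norm_num
    | succ n ih => rw [hrec n, ih]; ring
  have hderiv : ∀ t : ℝ, deriv (fun s : ℝ => s ^ 2 / 2) t = t := by
    intro t
    have : deriv (fun s : ℝ => s ^ 2 / 2) t = deriv (fun s : ℝ => s ^ 2) t / 2 := by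
      simp [deriv_div_const]
    rw [this, deriv_pow_field]; ring
  refine ⟨hform, ?_, by simp [hderiv], fun t => by simp [hderiv]⟩
  have : Tendsto (fun k : ℕ => 1 + (1 / 2 : ℝ) ^ k) atTop (𝓝 (1 + 0)) := by
    exact tendsto_const_nhds.add (tendsto_pow_atTop_nhds_zero_of_lt_one (by norm_num) (by norm_num))
  simpa [funext hform] using this
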